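/- For every real number a > 0, the integral ∫₀^a (log x)·log(a−x) dx equals a·[(log a)² − 2 log a + 2 − π²/6]. -/

import Mathlib

open MeasureTheory Set Filter intervalIntegral


/-- For `0 < c` and `0 < x ≤ 1`, `|log x| ≤ c⁻¹ * x ^ (-c)`. -/
lemma aux_abs_log_le_rpow {c : ℝ} (hc : 0 < c) {x : ℝ} (hx0 : 0 ≤ x) (hx1 : x ≤ 1) :
    |Real.log x| ≤ c⁻¹ * x ^ (-c) := by
  rcases eq_or_lt_of_le hx0 with h | h
  · rw [← h]
    simp only [Real.log_zero, abs_zero]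
    positivity
  rw [abs_of_nonpos (Real.log_nonpos h.le hx1), inv_mul_eq_div, le_div_iff₀ hc]
  have h1 : Real.log (x ^ (-c)) ≤ x ^ (-c) - 1 :=
    Real.log_le_sub_one_of_pos (Real.rpow_pos_of_pos h _)
  rw [Real.log_rpow h] at h1
  nlinarith

lemma aux_integrableOn_log : IntegrableOn Real.log (Ioc (0:ℝ) 1) := by
  apply Integrable.mono' (g := fun x : ℝ => 2 * x ^ (-(1/2 : ℝ)))
  · have : IntervalIntegrable (fun x : ℝ => 2 * x ^ (-(1/2 : ℝ))) volume 0 1 :=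
      (intervalIntegral.intervalIntegrable_rpow' (by norm_num)).const_mul 2
    exact (intervalIntegrable_iff_integrableOn_Ioc_of_le zero_le_one).mp this
  · exact Real.measurable_log.aestronglyMeasurable
  · filter_upwards [ae_restrict_mem measurableSet_Ioc] with x hx
    have := aux_abs_log_le_rpow (c := 1/2) (by norm_num) hx.1.le hx.2
    simpa [Real.norm_eq_abs] using this

lemma aux_integrableOn_pow_mul_log (n : ℕ) :
    IntegrableOn (fun x : ℝ => x ^ n * Real.log x) (Ioc (0:ℝ) 1) := by
  apply Integrable.mono' (g := fun x : ℝ => |Real.log x|) aux_integrableOn_log.abs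
  · exact ((measurable_id.pow_const n).mul Real.measurable_log).aestronglyMeasurable
  · filter_upwards [ae_restrict_mem measurableSet_Ioc] with x hx
    rw [Real.norm_eq_abs, abs_mul]
    have h1 : |x ^ n| ≤ 1 := by
      rw [abs_of_nonneg (pow_nonneg hx.1.le n)]
      exact pow_le_one₀ hx.1.le hx.2
    nlinarith [abs_nonneg (Real.log x), abs_nonneg (x ^ n)]

lemma aux_integral_pow_mul_log (n : ℕ) :
    ∫ x in (0:ℝ)..1, x ^ n * Real.log x = -(1 / ((n : ℝ) + 1) ^ 2) := by
  have hcont : ContinuousOn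
      (fun x : ℝ => x ^ (n+1) * Real.log x / ((n : ℝ) + 1) - x ^ (n+1) / ((n : ℝ) + 1) ^ 2)
      (Icc 0 1) := by
    have heq : (fun x : ℝ => x ^ (n+1) * Real.log x / ((n : ℝ) + 1) - x ^ (n+1) / ((n : ℝ) + 1) ^ 2)
        = fun x : ℝ => x ^ n * (x * Real.log x) / ((n : ℝ) + 1) - x ^ (n+1) / ((n : ℝ) + 1) ^ 2 := by
      funext x; ring
    rw [heq]
    exact ((((continuous_pow n).mul Real.continuous_mul_log).div_const _).sub
      ((continuous_pow (n+1)).div_const _)).continuousOn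
  have hderiv : ∀ x ∈ Ioo (0:ℝ) 1, HasDerivWithinAt
      (fun x : ℝ => x ^ (n+1) * Real.log x / ((n : ℝ) + 1) - x ^ (n+1) / ((n : ℝ) + 1) ^ 2)
      (x ^ n * Real.log x) (Ioi x) x := by
    intro x hx
    have hx0 : x ≠ 0 := ne_of_gt hx.1
    have h1 : HasDerivAt (fun x : ℝ => x ^ (n+1) * Real.log x)
        ((((n:ℝ)+1) * x ^ n) * Real.log x + x ^ (n+1) * x⁻¹) x := by
      have hp : HasDerivAt (fun x : ℝ => x ^ (n+1)) (((n:ℝ)+1) * x ^ n) x := by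
        simpa using hasDerivAt_pow (n+1) x
      exact hp.mul (Real.hasDerivAt_log hx0)
    have h2 : HasDerivAt (fun x : ℝ => x ^ (n+1)) (((n:ℝ)+1) * x ^ n) x := by
      simpa using hasDerivAt_pow (n+1) x
    have h3 := (h1.div_const ((n:ℝ)+1)).sub (h2.div_const (((n:ℝ)+1)^2))
    have hn1 : ((n:ℝ)+1) ≠ 0 := by positivity
    have heq : ((((n:ℝ)+1) * x ^ n) * Real.log x + x ^ (n+1) * x⁻¹) / ((n:ℝ)+1)
        - (((n:ℝ)+1) * x ^ n) / (((n:ℝ)+1)^2) = x ^ n * Real.log x := by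
      field_simp
      ring
    rw [heq] at h3
    exact h3.hasDerivWithinAt
  have hint : IntervalIntegrable (fun x : ℝ => x ^ n * Real.log x) volume 0 1 :=
    (intervalIntegrable_iff_integrableOn_Ioc_of_le zero_le_one).mpr (aux_integrableOn_pow_mul_log n)
  rw [intervalIntegral.integral_eq_sub_of_hasDeriv_right_of_le zero_le_one hcont hderiv hint]
  simp [Real.log_zero, Real.log_one]

lemma aux_integral_log : ∫ x in (0:ℝ)..1, Real.log x = -1 := by
  have := aux_integral_pow_mul_log 0
  simpa using this

lemma aux_hasSum : HasSum (fun n : ℕ => 1 / (((n:ℝ) + 1) * ((n:ℝ) + 2) ^ 2))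
    (2 - Real.pi ^ 2 / 6) := by
  have h2 : HasSum (fun n : ℕ => 1 / ((n:ℝ) + 2) ^ 2) (Real.pi ^ 2 / 6 - 1) := by
    have h0 : HasSum (fun n : ℕ => 1 / (n:ℝ) ^ 2)
        ((Real.pi ^ 2 / 6 - 1) + ∑ i ∈ Finset.range 2, 1 / (i:ℝ) ^ 2) := by
      convert hasSum_zeta_two using 1
      norm_num [Finset.sum_range_succ]
    have h := (hasSum_nat_add_iff (f := fun n : ℕ => 1 / (n:ℝ) ^ 2) 2).mpr h0
    convert h using 2 with n
    · rfl
    push_cast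
    ring_nf
  have h1 : HasSum (fun n : ℕ => 1 / ((n:ℝ) + 1) - 1 / ((n:ℝ) + 2)) 1 := by
    rw [hasSum_iff_tendsto_nat_of_nonneg]
    · have hps : ∀ N : ℕ, ∑ i ∈ Finset.range N, (1 / ((i:ℝ) + 1) - 1 / ((i:ℝ) + 2))
          = 1 - 1 / ((N:ℝ) + 1) := by
        intro N
        have := Finset.sum_range_sub' (fun i : ℕ => 1 / ((i:ℝ) + 1)) N
        simp only [Nat.cast_add, Nat.cast_one] at this
        convert this using 2 with i
        · push_cast; ring_nf
        · norm_num
      simp_rw [hps]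
      have : Tendsto (fun N : ℕ => 1 - 1 / ((N:ℝ) + 1)) atTop (nhds (1 - 0)) :=
        tendsto_const_nhds.sub tendsto_one_div_add_atTop_nhds_zero_nat
      simpa using this
    · intro i
      have h1 : (0:ℝ) < (i:ℝ) + 1 := by positivity
      have h2 : ((i:ℝ) + 1) ≤ (i:ℝ) + 2 := by linarith
      have := one_div_le_one_div_of_le h1 h2
      linarith
  have hsum := h1.sub h2
  have heq : (fun n : ℕ => 1 / (((n:ℝ) + 1) * ((n:ℝ) + 2) ^ 2))
      = fun n : ℕ => (1 / ((n:ℝ) + 1) - 1 / ((n:ℝ) + 2)) - 1 / ((n:ℝ) + 2) ^ 2 := by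
    funext n
    have hn1 : ((n:ℝ) + 1) ≠ 0 := by positivity
    have hn2 : ((n:ℝ) + 2) ≠ 0 := by positivity
    field_simp
    ring
  rw [heq]
  convert hsum using 1
  · rfl
  ring


lemma aux_core : ∫ x in (0:ℝ)..1, Real.log x * Real.log (1 - x) = 2 - Real.pi ^ 2 / 6 := by
  rw [intervalIntegral.integral_of_le zero_le_one, MeasureTheory.integral_Ioc_eq_integral_Ioo]
  set F : ℕ → ℝ → ℝ := fun n x => (-Real.log x) * (x ^ (n+1) / ((n:ℝ) + 1)) with hF
  have hFeq : ∀ n : ℕ, ∀ x : ℝ, F n x = (-(1 / ((n:ℝ)+1))) * (x ^ (n+1) * Real.log x) := by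
    intro n x; rw [hF]; ring
  have hF_int : ∀ n, IntegrableOn (F n) (Ioo (0:ℝ) 1) := by
    intro n
    have : IntegrableOn (fun x : ℝ => (-(1 / ((n:ℝ)+1))) * (x ^ (n+1) * Real.log x))
        (Ioo (0:ℝ) 1) :=
      (((aux_integrableOn_pow_mul_log (n+1)).mono_set Ioo_subset_Ioc_self).const_mul _)
    exact this.congr_fun (fun x _ => (hFeq n x).symm) measurableSet_Ioo
  have hF_val : ∀ n, ∫ x in Ioo (0:ℝ) 1, F n x = 1 / (((n:ℝ) + 1) * ((n:ℝ) + 2) ^ 2) := by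
    intro n
    rw [← MeasureTheory.integral_Ioc_eq_integral_Ioo,
      ← intervalIntegral.integral_of_le zero_le_one]
    calc ∫ x in (0:ℝ)..1, F n x
        = ∫ x in (0:ℝ)..1, (-(1 / ((n:ℝ)+1))) * (x ^ (n+1) * Real.log x) := by
          apply intervalIntegral.integral_congr; intro x _; exact hFeq n x
      _ = (-(1 / ((n:ℝ)+1))) * ∫ x in (0:ℝ)..1, x ^ (n+1) * Real.log x := by
          rw [intervalIntegral.integral_const_mul]
      _ = 1 / (((n:ℝ) + 1) * ((n:ℝ) + 2) ^ 2) := by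
          rw [aux_integral_pow_mul_log (n+1)]
          push_cast
          rw [neg_mul_neg, div_mul_div_comm, one_mul]
          have : ((n:ℝ) + 1 + 1) = (n:ℝ) + 2 := by ring
          rw [this]
  have hnorm : ∀ n, ∫ x in Ioo (0:ℝ) 1, ‖F n x‖ = 1 / (((n:ℝ) + 1) * ((n:ℝ) + 2) ^ 2) := by
    intro n
    rw [← hF_val n]
    apply setIntegral_congr_fun measurableSet_Ioo
    intro x hx
    have h1 : 0 ≤ -Real.log x := by
      have := Real.log_nonpos hx.1.le hx.2.le; linarith
    have h2 : 0 ≤ x ^ (n+1) / ((n:ℝ) + 1) :=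
      div_nonneg (pow_nonneg hx.1.le _) (by positivity)
    simp only [hF, Real.norm_eq_abs]
    exact abs_of_nonneg (mul_nonneg h1 h2)
  have hsummable : Summable fun n : ℕ => ∫ x in Ioo (0:ℝ) 1, ‖F n x‖ :=
    aux_hasSum.summable.congr fun n => (hnorm n).symm
  have hkey := MeasureTheory.integral_tsum_of_summable_integral_norm hF_int hsummable
  have htsum : ∫ x in Ioo (0:ℝ) 1, (∑' n, F n x) = ∫ x in Ioo (0:ℝ) 1, Real.log x * Real.log (1-x) := by
    apply setIntegral_congr_fun measurableSet_Ioo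
    intro x hx
    have habs : |x| < 1 := by rw [abs_of_pos hx.1]; exact hx.2
    have h := (Real.hasSum_pow_div_log_of_abs_lt_one habs).mul_left (-Real.log x)
    simp only [hF]
    rw [h.tsum_eq]
    ring
  rw [← htsum, ← hkey]
  have := aux_hasSum.tsum_eq
  rw [← this]
  exact tsum_congr fun n => hF_val n


lemma aux_II_log : IntervalIntegrable Real.log volume 0 1 :=
  (intervalIntegrable_iff_integrableOn_Ioc_of_le zero_le_one).mpr aux_integrableOn_log

lemma aux_II_log_one_sub : IntervalIntegrable (fun x : ℝ => Real.log (1 - x)) volume 0 1 := by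
  have h := aux_II_log.comp_sub_left 1
  simpa using h.symm

lemma aux_II_rpow_one_sub : IntervalIntegrable (fun x : ℝ => (1 - x) ^ (-(1/2 : ℝ))) volume 0 1 := by
  have h := (intervalIntegral.intervalIntegrable_rpow' (a := 0) (b := 1)
    (r := -(1/2 : ℝ)) (by norm_num)).comp_sub_left 1
  simpa using h.symm

lemma aux_II_prod : IntervalIntegrable (fun x : ℝ => Real.log x * Real.log (1 - x)) volume 0 1 := by
  rw [intervalIntegrable_iff_integrableOn_Ioc_of_le zero_le_one]
  apply Integrable.mono'
    (g := fun x : ℝ => 16 * x ^ (-(1/2 : ℝ)) + 16 * (1 - x) ^ (-(1/2 : ℝ)))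
  · have h : IntervalIntegrable
        (fun x : ℝ => 16 * x ^ (-(1/2 : ℝ)) + 16 * (1 - x) ^ (-(1/2 : ℝ))) volume 0 1 :=
      ((intervalIntegral.intervalIntegrable_rpow' (by norm_num)).const_mul 16).add
        (aux_II_rpow_one_sub.const_mul 16)
    exact (intervalIntegrable_iff_integrableOn_Ioc_of_le zero_le_one).mp h
  · exact (Real.measurable_log.mul
      (Real.measurable_log.comp (measurable_const.sub measurable_id))).aestronglyMeasurable
  · filter_upwards [ae_restrict_mem measurableSet_Ioc] with x hx
    have hx0 : 0 ≤ x := hx.1.le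
    have hx1 : x ≤ 1 := hx.2
    have h1 : |Real.log x| ≤ 4 * x ^ (-(1/4 : ℝ)) := by
      have := aux_abs_log_le_rpow (c := 1/4) (by norm_num) hx0 hx1
      norm_num at this ⊢
      linarith
    have h2 : |Real.log (1 - x)| ≤ 4 * (1 - x) ^ (-(1/4 : ℝ)) := by
      have := aux_abs_log_le_rpow (c := 1/4) (by norm_num) (by linarith : (0:ℝ) ≤ 1 - x)
        (by linarith : (1:ℝ) - x ≤ 1)
      norm_num at this ⊢
      linarith
    set u := x ^ (-(1/4 : ℝ)) with hu
    set v := (1 - x) ^ (-(1/4 : ℝ)) with hv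
    have hu0 : 0 ≤ u := Real.rpow_nonneg hx0 _
    have hv0 : 0 ≤ v := Real.rpow_nonneg (by linarith) _
    have husq : u * u = x ^ (-(1/2 : ℝ)) := by
      rw [hu, ← Real.rpow_add' hx0 (by norm_num)]
      norm_num
    have hvsq : v * v = (1 - x) ^ (-(1/2 : ℝ)) := by
      rw [hv, ← Real.rpow_add' (by linarith) (by norm_num)]
      norm_num
    rw [Real.norm_eq_abs, abs_mul]
    calc |Real.log x| * |Real.log (1 - x)| ≤ (4 * u) * (4 * v) := by
          apply mul_le_mul h1 h2 (abs_nonneg _) (by positivity)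
      _ = 16 * (u * v) := by ring
      _ ≤ 16 * (u * u + v * v) := by nlinarith [sq_nonneg (u - v)]
      _ = 16 * x ^ (-(1/2 : ℝ)) + 16 * (1 - x) ^ (-(1/2 : ℝ)) := by rw [husq, hvsq]; ring

lemma aux_integral_log_one_sub : ∫ x in (0:ℝ)..1, Real.log (1 - x) = -1 := by
  have h := intervalIntegral.integral_comp_sub_left (a := 0) (b := 1) Real.log 1
  simpa [aux_integral_log] using h

/-- For `a > 0`, `∫₀^a (log x) * log(a - x) dx = a * ((log a)² - 2 log a + 2 - π²/6)`. -/
theorem integral_log_mul_log_sub_eq (a : ℝ) (ha : 0 < a) :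
    ∫ x in (0:ℝ)..a, Real.log x * Real.log (a - x)
      = a * ((Real.log a) ^ 2 - 2 * Real.log a + 2 - Real.pi ^ 2 / 6) := by
  have hsub := intervalIntegral.smul_integral_comp_mul_left (a := 0) (b := 1)
    (fun x => Real.log x * Real.log (a - x)) a
  rw [mul_zero, mul_one] at hsub
  rw [← hsub]
  set c := Real.log a with hc
  have hcongr : ∫ x in (0:ℝ)..1, Real.log (a * x) * Real.log (a - a * x)
      = ∫ x in (0:ℝ)..1, (c ^ 2 + (c * Real.log (1 - x)
          + (c * Real.log x + Real.log x * Real.log (1 - x)))) := by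
    apply intervalIntegral.integral_congr_ae
    have hne : ∀ᵐ x : ℝ, x ≠ (1:ℝ) := by
      rw [MeasureTheory.ae_iff]
      simp only [ne_eq, not_not]
      rw [show {x : ℝ | x = 1} = {(1:ℝ)} by ext y; simp]
      exact measure_singleton 1
    filter_upwards [hne] with x hx1 hx
    rw [Set.uIoc_of_le zero_le_one] at hx
    have hx0 : 0 < x := hx.1
    have hxlt : x < 1 := lt_of_le_of_ne hx.2 hx1
    have e1 : Real.log (a * x) = c + Real.log x := Real.log_mul ha.ne' hx0.ne'
    have e2 : Real.log (a - a * x) = c + Real.log (1 - x) := by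
      rw [show a - a * x = a * (1 - x) by ring,
        Real.log_mul ha.ne' (by linarith : (1:ℝ) - x ≠ 0)]
    rw [e1, e2]
    ring
  rw [hcongr]
  have h2 : IntervalIntegrable (fun x : ℝ => c * Real.log (1 - x)) volume 0 1 :=
    aux_II_log_one_sub.const_mul c
  have h3 : IntervalIntegrable (fun x : ℝ => c * Real.log x) volume 0 1 :=
    aux_II_log.const_mul c
  have h4 := aux_II_prod
  rw [intervalIntegral.integral_add (intervalIntegrable_const) (h2.add (h3.add h4)),
    intervalIntegral.integral_add h2 (h3.add h4),
    intervalIntegral.integral_add h3 h4,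
    intervalIntegral.integral_const_mul, intervalIntegral.integral_const_mul,
    aux_integral_log, aux_integral_log_one_sub, aux_core,
    intervalIntegral.integral_const]
  simp only [smul_eq_mul]
  ring
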